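/- Let f, g be semi-invariants of a finite-dimensional complex Lie algebra g, a ∈ g*, and λ ∈ ℂ*. Then the shifted polynomial h(x) = g(a + λx) satisfies {f, h}_a = 0, where {F,G}_a(x) = ⟨a, [dF(x), dG(x)]⟩ is the frozen argument bracket. -/

import Mathlib

open MvPolynomial

/-- The Lie–Poisson bracket on `S(g) = ℂ[x₁,…,xₙ]`, where `c` are the structure
constants of `g` in a fixed basis. -/
noncomputable def poissonBracket (n : ℕ) (c : Fin n → Fin n → Fin n → ℂ)
    (f g : MvPolynomial (Fin n) ℂ) : MvPolynomial (Fin n) ℂ :=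
  ∑ i : Fin n, ∑ j : Fin n,
    (∑ k : Fin n, C (c i j k) * X k) * pderiv i f * pderiv j g

/-- The frozen argument bracket at `a ∈ g*` (coordinates of `a` in the dual basis). -/
noncomputable def frozenBracket (n : ℕ) (c : Fin n → Fin n → Fin n → ℂ)
    (a : Fin n → ℂ) (f g : MvPolynomial (Fin n) ℂ) : MvPolynomial (Fin n) ℂ :=
  ∑ i : Fin n, ∑ j : Fin n,
    C (∑ k : Fin n, c i j k * a k) * pderiv i f * pderiv j g

/-- `f` is a semi-invariant: there is a character `χ` of `g` (vanishing on `[g,g]`)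
with `{f,h} = χ(dh)·f` for all `h`. -/
def IsSemiInvariant (n : ℕ) (c : Fin n → Fin n → Fin n → ℂ)
    (f : MvPolynomial (Fin n) ℂ) : Prop :=
  ∃ χ : Fin n → ℂ, (∀ i j, ∑ k, c i j k * χ k = 0) ∧
    ∀ h : MvPolynomial (Fin n) ℂ,
      poissonBracket n c f h = (∑ i, C (χ i) * pderiv i h) * f

/-- The shifted polynomial `x ↦ g(a + λx)`. -/
noncomputable def shiftPoly (n : ℕ) (a : Fin n → ℂ) (l : ℂ)
    (g : MvPolynomial (Fin n) ℂ) : MvPolynomial (Fin n) ℂ :=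
  bind₁ (fun k => C (a k) + C l * X k) g

/-! ### Auxiliary machinery -/

/-- The constant-coefficient derivation `h ↦ ∑ χ i · ∂ᵢ h`. -/
noncomputable def Dop (n : ℕ) (χ : Fin n → ℂ) (p : MvPolynomial (Fin n) ℂ) :
    MvPolynomial (Fin n) ℂ := ∑ i, C (χ i) * pderiv i p

variable {n : ℕ}

lemma pderiv_pderiv (i j : Fin n) (p : MvPolynomial (Fin n) ℂ) :
    pderiv i (pderiv j p) = pderiv j (pderiv i p) := by
  induction p using MvPolynomial.induction_on with
  | C a => simp
  | add p q hp hq => simp [hp, hq]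
  | mul_X p k hp =>
    have h1 : ∀ a b : Fin n, pderiv a (pderiv b (X k : MvPolynomial (Fin n) ℂ)) = 0 := by
      intro a b
      rcases eq_or_ne k b with rfl | h
      · simp
      · simp [pderiv_X_of_ne h]
    simp only [pderiv_mul, map_add, hp, h1]
    ring

lemma Dop_sum (χ : Fin n → ℂ) {α : Type*} (s : Finset α) (f : α → MvPolynomial (Fin n) ℂ) :
    Dop n χ (∑ x ∈ s, f x) = ∑ x ∈ s, Dop n χ (f x) := by
  simp only [Dop, map_sum, Finset.mul_sum]
  exact Finset.sum_comm

lemma Dop_C (χ : Fin n → ℂ) (x : ℂ) : Dop n χ (C x) = 0 := by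
  simp [Dop]

lemma Dop_X (χ : Fin n → ℂ) (k : Fin n) : Dop n χ (X k) = C (χ k) := by
  rw [Dop, Finset.sum_eq_single k
    (fun i _ hik => by rw [pderiv_X_of_ne (Ne.symm hik), mul_zero])
    (fun h => absurd (Finset.mem_univ k) h)]
  rw [pderiv_X_self, mul_one]

lemma Dop_mul (χ : Fin n → ℂ) (p q : MvPolynomial (Fin n) ℂ) :
    Dop n χ (p * q) = Dop n χ p * q + p * Dop n χ q := by
  simp only [Dop, pderiv_mul, mul_add, Finset.sum_add_distrib, Finset.sum_mul, Finset.mul_sum]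
  congr 1 <;> exact Finset.sum_congr rfl fun i _ => by ring

lemma Dop_pderiv (χ : Fin n → ℂ) (i : Fin n) (p : MvPolynomial (Fin n) ℂ) :
    pderiv i (Dop n χ p) = Dop n χ (pderiv i p) := by
  simp only [Dop, map_sum, pderiv_C_mul]
  exact Finset.sum_congr rfl fun j _ => by rw [pderiv_pderiv]

lemma Dop_comm (χ ψ : Fin n → ℂ) (p : MvPolynomial (Fin n) ℂ) :
    Dop n χ (Dop n ψ p) = Dop n ψ (Dop n χ p) := by
  simp only [Dop, map_sum, pderiv_C_mul, Finset.mul_sum]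
  rw [Finset.sum_comm]
  refine Finset.sum_congr rfl fun i _ => Finset.sum_congr rfl fun j _ => ?_
  rw [pderiv_pderiv]; ring

/-! #### Nilpotency of `Dop` -/

lemma finsupp_sum_eq (s : Fin n →₀ ℕ) : (s.sum fun _ e => e) = ∑ j : Fin n, s j :=
  Finsupp.sum_fintype _ _ (fun _ => rfl)

lemma sub_single_sum (s : Fin n →₀ ℕ) (i : Fin n) (hi : s i ≠ 0) :
    ((s - Finsupp.single i 1).sum fun _ e => e) = (s.sum fun _ e => e) - 1 := by
  rw [finsupp_sum_eq, finsupp_sum_eq]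
  rw [← Finset.add_sum_erase _ _ (Finset.mem_univ i), ← Finset.add_sum_erase _ s (Finset.mem_univ i)]
  have h1 : (s - Finsupp.single i 1 : Fin n →₀ ℕ) i = s i - 1 := by
    rw [Finsupp.tsub_apply, Finsupp.single_eq_same]
  have h2 : ∀ j, j ≠ i → (s - Finsupp.single i 1 : Fin n →₀ ℕ) j = s j := by
    intro j hj
    rw [Finsupp.tsub_apply, Finsupp.single_eq_of_ne' (Ne.symm hj), Nat.sub_zero]
  rw [h1, Finset.sum_congr rfl (fun j hj => h2 j (Finset.ne_of_mem_erase hj))]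
  exact (Nat.sub_add_comm (Nat.one_le_iff_ne_zero.mpr hi)).symm

lemma td_pderiv (i : Fin n) (p : MvPolynomial (Fin n) ℂ) :
    (pderiv i p).totalDegree ≤ p.totalDegree - 1 := by
  conv_lhs => rw [p.as_sum]
  rw [map_sum]
  refine totalDegree_finsetSum_le (fun s hs => ?_)
  rw [pderiv_monomial]
  rcases eq_or_ne (s i) 0 with h | h
  · simp [h]
  · refine (totalDegree_monomial_le _ _).trans ?_
    simp only [Function.id_def]
    rw [sub_single_sum s i h]
    exact Nat.sub_le_sub_right (le_totalDegree hs) 1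

lemma pderiv_eq_zero_of_td (i : Fin n) (p : MvPolynomial (Fin n) ℂ)
    (h : p.totalDegree = 0) : pderiv i p = 0 := by
  conv_lhs => rw [p.as_sum]
  rw [map_sum]
  refine Finset.sum_eq_zero fun s hs => ?_
  rw [pderiv_monomial, ((totalDegree_eq_zero_iff _ p).mp h) s hs i]
  simp

lemma td_Dop (χ : Fin n → ℂ) (p : MvPolynomial (Fin n) ℂ) :
    (Dop n χ p).totalDegree ≤ p.totalDegree - 1 := by
  refine totalDegree_finsetSum_le fun i _ => ?_
  refine (totalDegree_mul _ _).trans ?_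
  rw [totalDegree_C, zero_add]
  exact td_pderiv i p

lemma Dop_iterate_zero (χ : Fin n → ℂ) :
    ∀ (d : ℕ) (p : MvPolynomial (Fin n) ℂ), p.totalDegree ≤ d → (Dop n χ)^[d+1] p = 0
  | 0, p, h => by
    rw [Function.iterate_one]
    refine Finset.sum_eq_zero fun i _ => ?_
    rw [pderiv_eq_zero_of_td i p (Nat.le_zero.mp h), mul_zero]
  | d+1, p, h => by
    rw [Function.iterate_succ_apply]
    exact Dop_iterate_zero χ d (Dop n χ p) ((td_Dop χ p).trans (by omega))

/-! #### Bracket lemmas -/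

lemma pb_antisymm {c : Fin n → Fin n → Fin n → ℂ} (hskew : ∀ i j k, c i j k = - c j i k)
    (p q : MvPolynomial (Fin n) ℂ) :
    poissonBracket n c q p = - poissonBracket n c p q := by
  unfold poissonBracket
  rw [Finset.sum_comm, ← Finset.sum_neg_distrib]
  refine Finset.sum_congr rfl fun i _ => ?_
  rw [← Finset.sum_neg_distrib]
  refine Finset.sum_congr rfl fun j _ => ?_
  have hA : (∑ k, C (c j i k) * X k : MvPolynomial (Fin n) ℂ) = -∑ k, C (c i j k) * X k := by
    rw [← Finset.sum_neg_distrib]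
    refine Finset.sum_congr rfl fun k _ => ?_
    rw [hskew j i k, map_neg]; ring
  rw [hA]; ring

lemma Dop_pb {c : Fin n → Fin n → Fin n → ℂ} {χ : Fin n → ℂ}
    (hχ : ∀ i j, ∑ k, c i j k * χ k = 0) (p q : MvPolynomial (Fin n) ℂ) :
    Dop n χ (poissonBracket n c p q) =
      poissonBracket n c (Dop n χ p) q + poissonBracket n c p (Dop n χ q) := by
  unfold poissonBracket
  rw [Dop_sum, ← Finset.sum_add_distrib]
  refine Finset.sum_congr rfl fun i _ => ?_
  rw [Dop_sum, ← Finset.sum_add_distrib]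
  refine Finset.sum_congr rfl fun j _ => ?_
  have hA : Dop n χ (∑ k, C (c i j k) * X k) = 0 := by
    rw [Dop_sum]
    have hterm : ∀ k : Fin n, Dop n χ (C (c i j k) * X k) = C (c i j k * χ k) := fun k => by
      rw [Dop_mul, Dop_C, Dop_X, zero_mul, zero_add, ← map_mul]
    rw [Finset.sum_congr rfl fun k _ => hterm k, ← map_sum, hχ i j, map_zero]
  rw [Dop_mul, Dop_mul, hA, Dop_pderiv, Dop_pderiv]
  ring

/-- The key vanishing: for nonzero semi-invariants `f`, `g`, both `χ_f(dg)` and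
`χ_g(df)` vanish. -/
lemma vanish {c : Fin n → Fin n → Fin n → ℂ} (hskew : ∀ i j k, c i j k = - c j i k)
    {f g : MvPolynomial (Fin n) ℂ} (hf0 : f ≠ 0) (hg0 : g ≠ 0)
    {χf χg : Fin n → ℂ} (hχf : ∀ i j, ∑ k, c i j k * χf k = 0)
    (hf : ∀ h, poissonBracket n c f h = Dop n χf h * f)
    (hg : ∀ h, poissonBracket n c g h = Dop n χg h * g) :
    Dop n χf g = 0 ∧ Dop n χg f = 0 := by
  have hiter : ∀ m h, poissonBracket n c ((Dop n χf)^[m] g) h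
      = Dop n χg h * (Dop n χf)^[m] g := by
    intro m
    induction m with
    | zero => exact hg
    | succ m ih =>
      intro h
      have e1 := Dop_pb hχf ((Dop n χf)^[m] g) h
      rw [ih h, ih (Dop n χf h), Dop_mul, Dop_comm] at e1
      rw [Function.iterate_succ_apply']
      linear_combination -e1
  classical
  obtain ⟨m, hm1, hm2⟩ : ∃ m, (Dop n χf)^[m] g ≠ 0 ∧ (Dop n χf)^[m+1] g = 0 := by
    have hex : ∃ N, (Dop n χf)^[N] g = 0 := ⟨_, Dop_iterate_zero χf _ g le_rfl⟩
    have hfind := Nat.find_spec hex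
    have hpos : Nat.find hex ≠ 0 := by
      intro h0; rw [h0, Function.iterate_zero_apply] at hfind; exact hg0 hfind
    refine ⟨Nat.find hex - 1, Nat.find_min hex (by omega), ?_⟩
    have he : Nat.find hex - 1 + 1 = Nat.find hex := by omega
    rw [he]; exact hfind
  set p := (Dop n χf)^[m] g with hp
  have hDp : Dop n χf p = 0 := by
    rw [hp, ← Function.iterate_succ_apply' (Dop n χf) m g]; exact hm2
  have h1 : poissonBracket n c f p = 0 := by rw [hf p, hDp, zero_mul]
  have h2 : Dop n χg f * p = 0 := by
    have e := hiter m f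
    rw [pb_antisymm hskew f p, h1, neg_zero] at e
    exact e.symm
  have hDgf : Dop n χg f = 0 := by
    rcases mul_eq_zero.mp h2 with h | h
    · exact h
    · exact absurd h hm1
  refine ⟨?_, hDgf⟩
  have h3 : poissonBracket n c g f = 0 := by rw [hg f, hDgf, zero_mul]
  have h4 := pb_antisymm hskew g f
  rw [h3, neg_zero] at h4
  have h5 := hf g
  rw [h4] at h5
  rcases mul_eq_zero.mp h5.symm with h | h
  · exact h
  · exact absurd h hf0

/-! #### Chain rule for the shift -/

lemma pderiv_shift (a : Fin n → ℂ) (l : ℂ) (j : Fin n) (p : MvPolynomial (Fin n) ℂ) :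
    pderiv j (bind₁ (fun k => C (a k) + C l * X k) p)
      = C l * bind₁ (fun k => C (a k) + C l * X k) (pderiv j p) := by
  induction p using MvPolynomial.induction_on with
  | C x => simp
  | add p q hp hq => simp [map_add, hp, hq, mul_add]
  | mul_X p k hp =>
    have hXd : (pderiv j (C (a k) + C l * X k) : MvPolynomial (Fin n) ℂ)
        = C l * bind₁ (fun k => C (a k) + C l * X k) (pderiv j (X k)) := by
      rcases eq_or_ne k j with rfl | hkj
      · simp
      · simp [pderiv_X_of_ne hkj]
    conv_rhs => rw [pderiv_mul, map_add, map_mul, map_mul, bind₁_X_right]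
    conv_lhs => rw [map_mul, bind₁_X_right, pderiv_mul, hp, hXd]
    ring

theorem stmt4 (n : ℕ) (c : Fin n → Fin n → Fin n → ℂ)
    (hskew : ∀ i j k, c i j k = - c j i k)
    (hjacobi : ∀ i j l m, (∑ k, c i j k * c k l m) + (∑ k, c j l k * c k i m) +
      (∑ k, c l i k * c k j m) = 0)
    (f g : MvPolynomial (Fin n) ℂ)
    (hf : IsSemiInvariant n c f) (hg : IsSemiInvariant n c g)
    (a : Fin n → ℂ) (l : ℂ) (hl : l ≠ 0) :
    frozenBracket n c a f (shiftPoly n a l g) = 0 := by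
  obtain ⟨χf, hχf, hf⟩ := hf
  obtain ⟨χg, hχg, hg⟩ := hg
  by_cases hf0 : f = 0
  · simp [frozenBracket, hf0]
  by_cases hg0 : g = 0
  · simp [frozenBracket, shiftPoly, hg0]
  have hf' : ∀ h, poissonBracket n c f h = Dop n χf h * f := hf
  have hg' : ∀ h, poissonBracket n c g h = Dop n χg h * g := hg
  obtain ⟨hDfg, hDgf⟩ := vanish hskew hf0 hg0 hχf hf' hg'
  -- notation
  -- per-coordinate form of semi-invariance of g
  have hcoord : ∀ i, ∑ j, (∑ k, C (c j i k) * X k) * pderiv j g = C (χg i) * g := by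
    intro i
    have e := hg (X i)
    unfold poissonBracket at e
    have l1 : ∀ j : Fin n, ∑ j', (∑ k, C (c j j' k) * X k) * pderiv j g * pderiv j' (X i)
        = (∑ k, C (c j i k) * X k) * pderiv j g := by
      intro j
      rw [Finset.sum_eq_single i
        (fun j' _ hne => by rw [pderiv_X_of_ne (Ne.symm hne), mul_zero])
        (fun h => absurd (Finset.mem_univ i) h)]
      rw [pderiv_X_self, mul_one]
    have l2 : (∑ i', C (χg i') * pderiv i' (X i) : MvPolynomial (Fin n) ℂ) = C (χg i) := by
      rw [Finset.sum_eq_single i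
        (fun i' _ hne => by rw [pderiv_X_of_ne (Ne.symm hne), mul_zero])
        (fun h => absurd (Finset.mem_univ i) h)]
      rw [pderiv_X_self, mul_one]
    rw [Finset.sum_congr rfl fun j _ => l1 j, l2] at e
    exact e
  have hTA : ∀ j i : Fin n, bind₁ (fun k => C (a k) + C l * X k) (∑ k, C (c j i k) * X k)
      = C (∑ k, c j i k * a k) + C l * ∑ k, C (c j i k) * X k := by
    intro j i
    rw [map_sum, map_sum C, Finset.mul_sum, ← Finset.sum_add_distrib]
    refine Finset.sum_congr rfl fun k _ => ?_
    rw [map_mul, bind₁_C_right, bind₁_X_right, map_mul]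
    ring
  have hdag : ∀ i, ∑ j, C (∑ k, c j i k * a k) * bind₁ (fun k => C (a k) + C l * X k) (pderiv j g)
      = C (χg i) * bind₁ (fun k => C (a k) + C l * X k) g
        - C l * ∑ j, (∑ k, C (c j i k) * X k) * bind₁ (fun k => C (a k) + C l * X k) (pderiv j g) := by
    intro i
    have e := congrArg (bind₁ (fun k => C (a k) + C l * X k)) (hcoord i)
    rw [map_sum, map_mul, bind₁_C_right] at e
    have e2 : ∀ j : Fin n, bind₁ (fun k => C (a k) + C l * X k)
          ((∑ k, C (c j i k) * X k) * pderiv j g)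
        = C (∑ k, c j i k * a k) * bind₁ (fun k => C (a k) + C l * X k) (pderiv j g)
          + C l * ((∑ k, C (c j i k) * X k) * bind₁ (fun k => C (a k) + C l * X k) (pderiv j g)) := by
      intro j
      rw [map_mul, hTA j i]
      ring
    rw [Finset.sum_congr rfl fun j _ => e2 j, Finset.sum_add_distrib, ← Finset.mul_sum] at e
    linear_combination e
  -- vanishing of the full Lie–Poisson pairing with the shifted polynomial
  have hS3 : ∑ i, ∑ j, (∑ k, C (c i j k) * X k) * pderiv i f
      * bind₁ (fun k => C (a k) + C l * X k) (pderiv j g) = 0 := by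
    have e := hf (bind₁ (fun k => C (a k) + C l * X k) g)
    unfold poissonBracket at e
    have eL : ∑ i, ∑ j, (∑ k, C (c i j k) * X k) * pderiv i f
          * pderiv j (bind₁ (fun k => C (a k) + C l * X k) g)
        = C l * ∑ i, ∑ j, (∑ k, C (c i j k) * X k) * pderiv i f
          * bind₁ (fun k => C (a k) + C l * X k) (pderiv j g) := by
      rw [Finset.mul_sum]
      refine Finset.sum_congr rfl fun i _ => ?_
      rw [Finset.mul_sum]
      refine Finset.sum_congr rfl fun j _ => ?_
      rw [pderiv_shift]; ring
    have eR : (∑ i, C (χf i) * pderiv i (bind₁ (fun k => C (a k) + C l * X k) g))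
        = C l * ∑ i, C (χf i) * bind₁ (fun k => C (a k) + C l * X k) (pderiv i g) := by
      rw [Finset.mul_sum]
      refine Finset.sum_congr rfl fun i _ => ?_
      rw [pderiv_shift]; ring
    have hTD : ∑ i, C (χf i) * bind₁ (fun k => C (a k) + C l * X k) (pderiv i g) = 0 := by
      have e4 : bind₁ (fun k => C (a k) + C l * X k) (Dop n χf g)
          = ∑ i, C (χf i) * bind₁ (fun k => C (a k) + C l * X k) (pderiv i g) := by
        rw [show Dop n χf g = ∑ i, C (χf i) * pderiv i g from rfl, map_sum]
        exact Finset.sum_congr rfl fun i _ => by rw [map_mul, bind₁_C_right]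
      rw [hDfg, map_zero] at e4
      exact e4.symm
    rw [eL, eR, hTD, mul_zero, zero_mul] at e
    rcases mul_eq_zero.mp e with h | h
    · exact absurd (C_eq_zero.mp h) hl
    · exact h
  -- main computation
  unfold frozenBracket shiftPoly
  have e3 : ∀ i j : Fin n, C (∑ k, c i j k * a k) * pderiv i f
        * pderiv j (bind₁ (fun k => C (a k) + C l * X k) g)
      = (-(C l) * pderiv i f)
        * (C (∑ k, c j i k * a k) * bind₁ (fun k => C (a k) + C l * X k) (pderiv j g)) := by
    intro i j
    rw [pderiv_shift]
    have hs : (∑ k, c i j k * a k) = -∑ k, c j i k * a k := by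
      rw [← Finset.sum_neg_distrib]
      exact Finset.sum_congr rfl fun k _ => by rw [hskew i j k]; ring
    rw [hs, map_neg]
    ring
  have inner : ∀ i : Fin n, ∑ j, C (∑ k, c i j k * a k) * pderiv i f
        * pderiv j (bind₁ (fun k => C (a k) + C l * X k) g)
      = (-(C l) * bind₁ (fun k => C (a k) + C l * X k) g) * (C (χg i) * pderiv i f)
        - (C l * C l) * ∑ j, (∑ k, C (c i j k) * X k) * pderiv i f
            * bind₁ (fun k => C (a k) + C l * X k) (pderiv j g) := by
    intro i
    have step1 : ∑ j, C (∑ k, c i j k * a k) * pderiv i f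
          * pderiv j (bind₁ (fun k => C (a k) + C l * X k) g)
        = (-(C l) * pderiv i f) * ∑ j, C (∑ k, c j i k * a k)
            * bind₁ (fun k => C (a k) + C l * X k) (pderiv j g) := by
      rw [Finset.mul_sum]
      exact Finset.sum_congr rfl fun j _ => e3 i j
    rw [step1, hdag i]
    have hAswap : ∑ j, (∑ k, C (c j i k) * X k)
          * bind₁ (fun k => C (a k) + C l * X k) (pderiv j g)
        = - ∑ j, ((∑ k, C (c i j k) * X k)
          * bind₁ (fun k => C (a k) + C l * X k) (pderiv j g)) := by
      rw [← Finset.sum_neg_distrib]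
      refine Finset.sum_congr rfl fun j _ => ?_
      have hA : (∑ k, C (c j i k) * X k : MvPolynomial (Fin n) ℂ) = -∑ k, C (c i j k) * X k := by
        rw [← Finset.sum_neg_distrib]
        exact Finset.sum_congr rfl fun k _ => by rw [hskew j i k, map_neg]; ring
      rw [hA]; ring
    have hpull : ∑ j, (∑ k, C (c i j k) * X k) * pderiv i f
          * bind₁ (fun k => C (a k) + C l * X k) (pderiv j g)
        = pderiv i f * ∑ j, ((∑ k, C (c i j k) * X k)
          * bind₁ (fun k => C (a k) + C l * X k) (pderiv j g)) := by
      rw [Finset.mul_sum]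
      exact Finset.sum_congr rfl fun j _ => by ring
    rw [hAswap, hpull]
    ring
  rw [Finset.sum_congr rfl fun i _ => inner i, Finset.sum_sub_distrib, ← Finset.mul_sum,
    ← Finset.mul_sum]
  have hDgf' : (∑ i, C (χg i) * pderiv i f : MvPolynomial (Fin n) ℂ) = 0 := hDgf
  rw [hS3, hDgf', mul_zero, mul_zero, sub_zero]
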